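/- Let A ∈ ℝ^{n×n} be symmetric negative definite, C ∈ ℝ^{p×n}, Q ∈ ℝ^{q×n}, S ∈ ℝ^{p×p} with SS^T ≻ 0. Then the observer gain L = A⁻¹C^T(SS^T)⁻¹ makes A + LC Hurwitz, and the DC gain of the error system e ↦ Qe driven by (w, Sv) equals ‖Q(A² + C^T(SS^T)⁻¹C)⁻¹Q^T‖^{1/2}, which is minimal over all L making A + LC invertible. -/

import Mathlib

set_option linter.unusedSectionVars false
set_option maxHeartbeats 1000000

open Matrix

/-- The spectral (ℓ² → ℓ²) operator norm of a real matrix. -/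
noncomputable def specNorm {p q : Type*} [Fintype p] [Fintype q] [DecidableEq q]
    (M : Matrix p q ℝ) : ℝ :=
  ‖LinearMap.toContinuousLinearMap (Matrix.toEuclideanLin M)‖

namespace Stmt13Aux

open scoped MatrixOrder

noncomputable def eCLM {m k : Type*} [Fintype m] [Fintype k] [DecidableEq k]
    (M : Matrix m k ℝ) : EuclideanSpace ℝ k →L[ℝ] EuclideanSpace ℝ m :=
  LinearMap.toContinuousLinearMap (Matrix.toEuclideanLin M)

variable {m k l : Type*} [Fintype m] [Fintype k] [Fintype l]
  [DecidableEq m] [DecidableEq k] [DecidableEq l]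

lemma specNorm_eq_norm (M : Matrix m k ℝ) : specNorm M = ‖eCLM M‖ := rfl

lemma specNorm_nonneg (M : Matrix m k ℝ) : 0 ≤ specNorm M := by
  rw [specNorm_eq_norm]; exact norm_nonneg _

lemma eCLM_mul (M : Matrix m k ℝ) (N : Matrix l m ℝ) :
    eCLM (N * M) = (eCLM N).comp (eCLM M) := by
  ext1 x
  simp [eCLM, Matrix.toEuclideanLin_apply, Matrix.mulVec_mulVec]

lemma eCLM_transpose (M : Matrix m k ℝ) :
    eCLM Mᵀ = ContinuousLinearMap.adjoint (eCLM M) := by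
  rw [eCLM, eCLM, ← conjTranspose_eq_transpose_of_trivial,
    Matrix.toEuclideanLin_conjTranspose_eq_adjoint,
    LinearMap.adjoint_toContinuousLinearMap]

lemma specNorm_mul_transpose (G : Matrix m k ℝ) :
    specNorm (G * Gᵀ) = specNorm G * specNorm G := by
  rw [specNorm_eq_norm, specNorm_eq_norm, eCLM_mul, eCLM_transpose]
  have h : (eCLM G).comp (ContinuousLinearMap.adjoint (eCLM G)) =
      (ContinuousLinearMap.adjoint (ContinuousLinearMap.adjoint (eCLM G))).comp
        (ContinuousLinearMap.adjoint (eCLM G)) := by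
    rw [ContinuousLinearMap.adjoint_adjoint]
  rw [h, ContinuousLinearMap.norm_adjoint_comp_self, LinearIsometryEquiv.norm_map]

lemma specNorm_eq_sqrt (G : Matrix m k ℝ) :
    specNorm G = Real.sqrt (specNorm (G * Gᵀ)) := by
  rw [specNorm_mul_transpose]
  rw [specNorm_eq_norm]
  exact (Real.sqrt_mul_self (norm_nonneg _)).symm

lemma inner_eCLM_nonneg (D : Matrix m m ℝ) (x : EuclideanSpace ℝ m) (hD : D.PosSemidef) :
    0 ≤ inner (𝕜 := ℝ) x (eCLM D x) := by
  have h := hD.dotProduct_mulVec_nonneg (WithLp.equiv 2 (m → ℝ) x)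
  simpa [eCLM, Matrix.toEuclideanLin_apply, LinearMap.coe_toContinuousLinearMap',
    PiLp.inner_apply, RCLike.inner_apply, dotProduct, mulVec, WithLp.equiv, mul_comm] using h

lemma specNorm_le_specNorm {P N : Matrix m m ℝ} (hP : P.PosSemidef)
    (hPN : (N - P).PosSemidef) : specNorm P ≤ specNorm N := by
  set B := CFC.sqrt P with hB
  have hBB : B * B = P := CFC.sqrt_mul_sqrt_self P hP.nonneg
  have hBt : Bᵀ = B := by
    have := (CFC.sqrt_nonneg P).posSemidef.1
    rwa [Matrix.IsHermitian, conjTranspose_eq_transpose_of_trivial] at this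
  have key : ∀ x : EuclideanSpace ℝ m, ‖eCLM B x‖ ≤ Real.sqrt (specNorm N) * ‖x‖ := by
    intro x
    have h1 : ‖eCLM B x‖ ^ 2 = inner (𝕜 := ℝ) x (eCLM P x) := by
      rw [← real_inner_self_eq_norm_sq]
      calc inner (𝕜 := ℝ) (eCLM B x) (eCLM B x)
          = inner (𝕜 := ℝ) x ((ContinuousLinearMap.adjoint (eCLM B)) (eCLM B x)) := by
            rw [ContinuousLinearMap.adjoint_inner_right]
        _ = inner (𝕜 := ℝ) x ((eCLM Bᵀ) (eCLM B x)) := by rw [eCLM_transpose]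
        _ = inner (𝕜 := ℝ) x (eCLM P x) := by
            rw [show (eCLM Bᵀ) (eCLM B x) = ((eCLM Bᵀ).comp (eCLM B)) x from rfl,
              ← eCLM_mul, hBt, hBB]
    have h2 : inner (𝕜 := ℝ) x (eCLM P x) ≤ inner (𝕜 := ℝ) x (eCLM N x) := by
      have h3 := inner_eCLM_nonneg (N - P) x hPN
      have h4 : eCLM (N - P) = eCLM N - eCLM P := by
        unfold eCLM; ext1 y; simp [map_sub]
      rw [h4] at h3
      simp only [ContinuousLinearMap.sub_apply, inner_sub_right] at h3
      linarith
    have h4 : inner (𝕜 := ℝ) x (eCLM N x) ≤ ‖eCLM N‖ * ‖x‖ ^ 2 := by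
      calc inner (𝕜 := ℝ) x (eCLM N x) ≤ ‖x‖ * ‖eCLM N x‖ := real_inner_le_norm _ _
        _ ≤ ‖x‖ * (‖eCLM N‖ * ‖x‖) := by
            gcongr; exact (eCLM N).le_opNorm x
        _ = ‖eCLM N‖ * ‖x‖ ^ 2 := by ring
    have h5 : ‖eCLM B x‖ ^ 2 ≤ (Real.sqrt (specNorm N) * ‖x‖) ^ 2 := by
      rw [mul_pow, Real.sq_sqrt (specNorm_nonneg N), specNorm_eq_norm]
      linarith
    calc ‖eCLM B x‖ = Real.sqrt (‖eCLM B x‖ ^ 2) := (Real.sqrt_sq (norm_nonneg _)).symm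
      _ ≤ Real.sqrt ((Real.sqrt (specNorm N) * ‖x‖) ^ 2) := Real.sqrt_le_sqrt h5
      _ = Real.sqrt (specNorm N) * ‖x‖ := Real.sqrt_sq
          (mul_nonneg (Real.sqrt_nonneg _) (norm_nonneg _))
  have hnormB : ‖eCLM B‖ ≤ Real.sqrt (specNorm N) :=
    (eCLM B).opNorm_le_bound (Real.sqrt_nonneg _) key
  calc specNorm P = specNorm (B * Bᵀ) := by rw [hBt, hBB]
    _ = specNorm B * specNorm B := specNorm_mul_transpose B
    _ ≤ Real.sqrt (specNorm N) * Real.sqrt (specNorm N) := by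
        rw [specNorm_eq_norm]
        exact mul_le_mul hnormB hnormB (norm_nonneg _) (Real.sqrt_nonneg _)
    _ = specNorm N := Real.mul_self_sqrt (specNorm_nonneg N)

lemma map_ofReal_mul {o : Type*} [Fintype o] (M : Matrix m o ℝ) (N : Matrix o k ℝ) :
    (M * N).map Complex.ofReal = M.map Complex.ofReal * N.map Complex.ofReal :=
  Matrix.map_mul (f := Complex.ofRealHom)

open scoped ComplexOrder in
lemma quadPos {M : Matrix m m ℝ} (hM : M.PosDef) (v : m → ℂ) (hv : v ≠ 0) :
    ∃ r : ℝ, 0 < r ∧ star v ⬝ᵥ (M.map Complex.ofReal *ᵥ v) = (r : ℂ) := by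
  set B := CFC.sqrt M with hB
  have hBB : B * B = M := CFC.sqrt_mul_sqrt_self M hM.posSemidef.nonneg
  have hBH : Bᴴ = B := (CFC.sqrt_nonneg M).posSemidef.1
  set Bc := B.map Complex.ofReal with hBc
  have hBcH : Bcᴴ = Bc := by
    rw [hBc, ← Matrix.conjTranspose_map Complex.ofReal
      (fun a => by simp [Complex.conj_ofReal]), hBH]
  have hMc : M.map Complex.ofReal = Bc * Bc := by
    rw [← hBB, map_ofReal_mul]
  have hBdet : B.det ≠ 0 := by
    intro h
    have : M.det = 0 := by rw [← hBB, det_mul, h, mul_zero]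
    exact hM.det_pos.ne' this
  have hBcdet : Bc.det ≠ 0 := by
    have h := (RingHom.map_det Complex.ofRealHom B).symm
    simp only [RingHom.mapMatrix_apply] at h
    rw [hBc, show (Complex.ofReal : ℝ → ℂ) = ⇑Complex.ofRealHom from rfl, h]
    simpa using hBdet
  set w := Bc *ᵥ v with hw
  have hwne : w ≠ 0 := by
    intro h
    have : Bc.det = 0 := Matrix.exists_mulVec_eq_zero_iff.mp ⟨v, hv, h⟩
    exact hBcdet this
  have hval : star v ⬝ᵥ (M.map Complex.ofReal *ᵥ v) = star w ⬝ᵥ w := by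
    rw [hMc, ← Matrix.mulVec_mulVec, Matrix.dotProduct_mulVec, ← hBcH, ← star_mulVec, hBcH]
  have hpos : 0 < star w ⬝ᵥ w := Matrix.dotProduct_star_self_pos_iff.mpr hwne
  rw [Complex.lt_def] at hpos
  refine ⟨(star w ⬝ᵥ w).re, by simpa using hpos.1, ?_⟩
  rw [hval]
  apply Complex.ext <;> simp [← hpos.2]

end Stmt13Aux

open Stmt13Aux MatrixOrder in
/-- The observer gain `L = A⁻¹Cᵀ(SSᵀ)⁻¹` makes `A + LC` Hurwitz, the DC gain
of the error system equals `‖Q(A² + Cᵀ(SSᵀ)⁻¹C)⁻¹Qᵀ‖^{1/2}`, and this value is minimal over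
all gains `L'` making `A + L'C` invertible. -/
theorem stmt13
    {n p q : ℕ}
    (A : Matrix (Fin n) (Fin n) ℝ) (hA : (-A).PosDef)
    (C : Matrix (Fin p) (Fin n) ℝ)
    (Q : Matrix (Fin q) (Fin n) ℝ)
    (S : Matrix (Fin p) (Fin p) ℝ) (hS : (S * Sᵀ).PosDef)
    (L : Matrix (Fin n) (Fin p) ℝ) (hL : L = A⁻¹ * Cᵀ * (S * Sᵀ)⁻¹) :
    (∀ μ ∈ spectrum ℂ ((A + L * C).map (Complex.ofReal)), μ.re < 0) ∧
    specNorm (-(Q * (A + L * C)⁻¹) * fromCols (1 : Matrix (Fin n) (Fin n) ℝ) (L * S)) =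
      Real.sqrt (specNorm (Q * (A * A + Cᵀ * (S * Sᵀ)⁻¹ * C)⁻¹ * Qᵀ)) ∧
    (∀ L' : Matrix (Fin n) (Fin p) ℝ, IsUnit (A + L' * C).det →
      Real.sqrt (specNorm (Q * (A * A + Cᵀ * (S * Sᵀ)⁻¹ * C)⁻¹ * Qᵀ)) ≤
        specNorm (-(Q * (A + L' * C)⁻¹) *
          fromCols (1 : Matrix (Fin n) (Fin n) ℝ) (L' * S))) := by
  have hAsymm : Aᵀ = A := by
    have := hA.1
    rw [Matrix.IsHermitian, conjTranspose_eq_transpose_of_trivial, transpose_neg] at this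
    exact neg_injective this
  have hAdet : IsUnit A.det := by
    have h0 : (-A).det ≠ 0 := hA.det_pos.ne'
    rw [det_neg] at h0
    exact isUnit_iff_ne_zero.mpr (fun h => h0 (by rw [h, mul_zero]))
  have hRdet : IsUnit (S * Sᵀ).det := isUnit_iff_ne_zero.mpr hS.det_pos.ne'
  have hRsymm : (S * Sᵀ)ᵀ = S * Sᵀ := by
    have := hS.1; rwa [Matrix.IsHermitian, conjTranspose_eq_transpose_of_trivial] at this
  have hRinv : (S * Sᵀ)⁻¹.PosDef := hS.inv
  set M : Matrix (Fin n) (Fin n) ℝ := A * A + Cᵀ * (S * Sᵀ)⁻¹ * C with hMdef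
  have hAApd : (A * A).PosDef := by
    refine Matrix.PosDef.of_dotProduct_mulVec_pos (by rw [Matrix.IsHermitian, conjTranspose_eq_transpose_of_trivial,
      transpose_mul, hAsymm]) (fun ⦃x⦄ hx => ?_)
    have hinj : Function.Injective A.mulVec :=
      Matrix.mulVec_injective_iff_isUnit.mpr ((Matrix.isUnit_iff_isUnit_det A).mpr hAdet)
    have hx' : A *ᵥ x ≠ 0 := fun h => hx (hinj (by rw [h, Matrix.mulVec_zero]))
    have heq : star x ⬝ᵥ (A * A) *ᵥ x = star (A *ᵥ x) ⬝ᵥ (A *ᵥ x) := by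
      rw [← Matrix.mulVec_mulVec, Matrix.dotProduct_mulVec, star_trivial, star_trivial,
        ← Matrix.mulVec_transpose, hAsymm]
    rw [heq]
    exact Matrix.dotProduct_star_self_pos_iff.mpr hx'
  have hMpd : M.PosDef := by
    rw [hMdef]
    apply hAApd.add_posSemidef
    have := hRinv.posSemidef.mul_mul_conjTranspose_same Cᵀ
    simpa [conjTranspose_eq_transpose_of_trivial] using this
  have hMdet : IsUnit M.det := isUnit_iff_ne_zero.mpr hMpd.det_pos.ne'
  have hMsymm : Mᵀ = M := by
    have := hMpd.1; rwa [Matrix.IsHermitian, conjTranspose_eq_transpose_of_trivial] at this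
  haveI := A.invertibleOfIsUnitDet hAdet
  haveI := M.invertibleOfIsUnitDet hMdet
  haveI := (S * Sᵀ).invertibleOfIsUnitDet hRdet
  have hXM : A * (A + L * C) = M := by
    rw [hL, hMdef]
    simp only [mul_add, Matrix.mul_assoc, Matrix.mul_inv_cancel_left_of_invertible]
  have hXinv : (A + L * C)⁻¹ = M⁻¹ * A := by
    apply Matrix.inv_eq_left_inv
    rw [Matrix.mul_assoc, hXM, Matrix.inv_mul_of_invertible]
  refine ⟨?_, ?_, ?_⟩
  · -- Part 1: Hurwitz
    intro μ hμ
    rw [spectrum.mem_iff] at hμ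
    rw [Matrix.isUnit_iff_isUnit_det, isUnit_iff_ne_zero, not_not] at hμ
    obtain ⟨v, hv0, hv⟩ := Matrix.exists_mulVec_eq_zero_iff.mpr hμ
    have hXv : (A + L * C).map Complex.ofReal *ᵥ v = μ • v := by
      rw [sub_mulVec, sub_eq_zero] at hv
      rw [← hv, Algebra.algebraMap_eq_smul_one, Matrix.smul_mulVec, Matrix.one_mulVec]
    obtain ⟨r₁, hr₁, hq₁⟩ := quadPos hMpd v hv0
    obtain ⟨r₂, hr₂, hq₂⟩ := quadPos hA v hv0
    have hMv : M.map Complex.ofReal *ᵥ v = μ • (A.map Complex.ofReal *ᵥ v) := by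
      rw [← hXM, map_ofReal_mul, ← Matrix.mulVec_mulVec, hXv, Matrix.mulVec_smul]
    have hnegA : (-A).map Complex.ofReal = -(A.map Complex.ofReal) := by
      ext i j; simp
    have h2 : star v ⬝ᵥ (A.map Complex.ofReal *ᵥ v) = -(r₂ : ℂ) := by
      rw [hnegA, Matrix.neg_mulVec, dotProduct_neg] at hq₂
      exact neg_eq_iff_eq_neg.mp hq₂
    have h1 : (r₁ : ℂ) = μ * -(r₂ : ℂ) := by
      rw [← hq₁, hMv, dotProduct_smul, smul_eq_mul, h2]
    have hr₂ne : (r₂ : ℂ) ≠ 0 := by exact_mod_cast hr₂.ne'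
    have hμeq : μ = ((-r₁ / r₂ : ℝ) : ℂ) := by
      push_cast
      rw [eq_div_iff hr₂ne]
      linear_combination h1
    rw [hμeq, Complex.ofReal_re]
    exact div_neg_of_neg_of_pos (neg_lt_zero.mpr hr₁) hr₂
  · -- Part 2: DC gain value
    have e1 : fromCols (1 : Matrix (Fin n) (Fin n) ℝ) (L * S) *
        fromRows ((1 : Matrix (Fin n) (Fin n) ℝ))ᵀ (L * S)ᵀ = 1 + L * (S * Sᵀ) * Lᵀ := by
      rw [fromCols_mul_fromRows, transpose_one, transpose_mul]
      simp only [Matrix.one_mul, Matrix.mul_assoc]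
    have hLt : Lᵀ = (S * Sᵀ)⁻¹ * (C * A⁻¹) := by
      rw [hL]
      simp [transpose_mul, Matrix.transpose_nonsing_inv, hAsymm, hRsymm,
        transpose_transpose, Matrix.mul_assoc]
    have h1 : (1 : Matrix (Fin n) (Fin n) ℝ) + L * (S * Sᵀ) * Lᵀ = A⁻¹ * M * A⁻¹ := by
      rw [hLt, hL, hMdef]
      simp only [mul_add, add_mul, Matrix.mul_assoc, Matrix.mul_inv_cancel_left_of_invertible,
        Matrix.inv_mul_cancel_left_of_invertible, Matrix.mul_inv_of_invertible,
        Matrix.inv_mul_of_invertible, Matrix.mul_one, Matrix.one_mul]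
    have hXit : ((A + L * C)⁻¹)ᵀ = A * M⁻¹ := by
      rw [hXinv, transpose_mul, Matrix.transpose_nonsing_inv, hAsymm, hMsymm]
    have core : (A + L * C)⁻¹ * (1 + L * (S * Sᵀ) * Lᵀ) * ((A + L * C)⁻¹)ᵀ = M⁻¹ := by
      rw [hXit, hXinv, h1]
      simp only [Matrix.mul_assoc, Matrix.mul_inv_cancel_left_of_invertible,
        Matrix.inv_mul_cancel_left_of_invertible, Matrix.mul_inv_of_invertible,
        Matrix.inv_mul_of_invertible, Matrix.mul_one]
    have hGG : (-(Q * (A + L * C)⁻¹) * fromCols (1 : Matrix (Fin n) (Fin n) ℝ) (L * S)) *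
        (-(Q * (A + L * C)⁻¹) * fromCols (1 : Matrix (Fin n) (Fin n) ℝ) (L * S))ᵀ =
        Q * M⁻¹ * Qᵀ := by
      rw [transpose_mul, transpose_fromCols, transpose_neg]
      simp only [Matrix.neg_mul, Matrix.mul_neg, neg_neg]
      rw [Matrix.mul_assoc (Q * (A + L * C)⁻¹),
        ← Matrix.mul_assoc (fromCols (1 : Matrix (Fin n) (Fin n) ℝ) (L * S)), e1]
      conv_rhs => rw [← core]
      simp only [Matrix.mul_assoc, transpose_mul]
    rw [specNorm_eq_sqrt (-(Q * (A + L * C)⁻¹) *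
      fromCols (1 : Matrix (Fin n) (Fin n) ℝ) (L * S)), hGG]
  · -- Part 3: optimality
    intro L' hX'det
    set X' := A + L' * C with hX'def
    haveI := X'.invertibleOfIsUnitDet hX'det
    set U := CFC.sqrt (S * Sᵀ)⁻¹ with hUdef
    have hUU : U * U = (S * Sᵀ)⁻¹ := CFC.sqrt_mul_sqrt_self _ hRinv.posSemidef.nonneg
    have hUsymm : Uᵀ = U := by
      have := (CFC.sqrt_nonneg (S * Sᵀ)⁻¹).posSemidef.1
      rwa [Matrix.IsHermitian, conjTranspose_eq_transpose_of_trivial] at this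
    have hUdet : IsUnit U.det := by
      have h := isUnit_iff_ne_zero.mpr hRinv.det_pos.ne'
      rw [← hUU, det_mul] at h
      exact isUnit_of_mul_isUnit_right h
    haveI := U.invertibleOfIsUnitDet hUdet
    set Z : Matrix (Fin n ⊕ Fin p) (Fin n) ℝ := fromRows A (U * C) with hZdef
    set W : Matrix (Fin n) (Fin n ⊕ Fin p) ℝ := fromCols 1 (L' * U⁻¹) with hWdef
    have hZtZ : Zᵀ * Z = M := by
      rw [hZdef, transpose_fromRows, fromCols_mul_fromRows, hMdef, hAsymm,
        transpose_mul, hUsymm,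
        show Cᵀ * U * (U * C) = Cᵀ * (U * U) * C from by simp only [Matrix.mul_assoc], hUU]
    have hWZ : W * Z = X' := by
      rw [hWdef, hZdef, fromCols_mul_fromRows, Matrix.one_mul, hX'def,
        show L' * U⁻¹ * (U * C) = L' * (U⁻¹ * U) * C from by simp only [Matrix.mul_assoc],
        Matrix.inv_mul_of_invertible, Matrix.mul_one]
    have hWWt : W * Wᵀ = 1 + L' * (S * Sᵀ) * L'ᵀ := by
      have hUinv2 : U⁻¹ * U⁻¹ = S * Sᵀ := by
        rw [← Matrix.mul_inv_rev, hUU, Matrix.nonsing_inv_nonsing_inv _ hRdet]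
      rw [hWdef, transpose_fromCols, fromCols_mul_fromRows, transpose_one,
        Matrix.mul_one, transpose_mul, Matrix.transpose_nonsing_inv, hUsymm,
        show L' * U⁻¹ * (U⁻¹ * L'ᵀ) = L' * (U⁻¹ * U⁻¹) * L'ᵀ from by simp only [Matrix.mul_assoc], hUinv2]
    set P : Matrix (Fin n ⊕ Fin p) (Fin n ⊕ Fin p) ℝ := Z * M⁻¹ * Zᵀ with hPdef
    have hPt : Pᵀ = P := by
      rw [hPdef]
      simp [transpose_mul, Matrix.transpose_nonsing_inv, hMsymm, Matrix.mul_assoc]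
    have hPP : P * P = P := by
      rw [hPdef,
        show Z * M⁻¹ * Zᵀ * (Z * M⁻¹ * Zᵀ) = Z * M⁻¹ * (Zᵀ * Z) * (M⁻¹ * Zᵀ) from by
          simp only [Matrix.mul_assoc], hZtZ,
        show Z * M⁻¹ * M * (M⁻¹ * Zᵀ) = Z * (M⁻¹ * M) * (M⁻¹ * Zᵀ) from by
          simp only [Matrix.mul_assoc],
        Matrix.inv_mul_of_invertible, Matrix.mul_one]
      simp only [Matrix.mul_assoc]
    have hProj : (1 - P).PosSemidef := by
      have h := Matrix.posSemidef_conjTranspose_mul_self (1 - P)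
      have e : (1 - P)ᴴ * (1 - P) = 1 - P := by
        rw [conjTranspose_eq_transpose_of_trivial, transpose_sub, transpose_one, hPt,
          show ((1 : Matrix (Fin n ⊕ Fin p) (Fin n ⊕ Fin p) ℝ) - P) * (1 - P)
            = 1 - P - P + P * P from by noncomm_ring, hPP]
        abel
      rw [← e]; exact h
    set G' := -(Q * X'⁻¹) * fromCols (1 : Matrix (Fin n) (Fin n) ℝ) (L' * S) with hG'def
    have e1' : fromCols (1 : Matrix (Fin n) (Fin n) ℝ) (L' * S) *
        fromRows ((1 : Matrix (Fin n) (Fin n) ℝ))ᵀ (L' * S)ᵀ = 1 + L' * (S * Sᵀ) * L'ᵀ := by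
      rw [fromCols_mul_fromRows, transpose_one, transpose_mul]
      simp only [Matrix.one_mul, Matrix.mul_assoc]
    have hGG' : G' * G'ᵀ = Q * X'⁻¹ * (1 + L' * (S * Sᵀ) * L'ᵀ) * (Q * X'⁻¹)ᵀ := by
      rw [hG'def, transpose_mul, transpose_fromCols, transpose_neg]
      simp only [Matrix.neg_mul, Matrix.mul_neg, neg_neg]
      rw [Matrix.mul_assoc (Q * X'⁻¹), ← Matrix.mul_assoc (fromCols (1 : Matrix (Fin n) (Fin n) ℝ) (L' * S)), e1']
      simp only [Matrix.mul_assoc, transpose_mul]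
    have hdiff : G' * G'ᵀ - Q * M⁻¹ * Qᵀ =
        (Q * X'⁻¹ * W) * (1 - P) * (Q * X'⁻¹ * W)ᵀ := by
      have expand : (Q * X'⁻¹ * W) * (1 - P) * (Q * X'⁻¹ * W)ᵀ =
          Q * X'⁻¹ * (W * Wᵀ) * (Q * X'⁻¹)ᵀ -
            Q * (X'⁻¹ * (W * Z)) * M⁻¹ * ((W * Z)ᵀ * ((X'⁻¹)ᵀ * Qᵀ)) := by
        rw [hPdef]
        simp only [transpose_mul, Matrix.mul_sub, Matrix.sub_mul, Matrix.mul_one,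
          Matrix.one_mul, Matrix.mul_assoc]
      rw [hGG', ← hWWt, expand, hWZ, Matrix.inv_mul_of_invertible,
        Matrix.transpose_nonsing_inv, Matrix.mul_inv_cancel_left_of_invertible]
      simp only [Matrix.mul_one]
    have hQMQpsd : (Q * M⁻¹ * Qᵀ).PosSemidef := by
      have h := hMpd.inv.posSemidef.mul_mul_conjTranspose_same Q
      simpa [conjTranspose_eq_transpose_of_trivial] using h
    have hdiffpsd : (G' * G'ᵀ - Q * M⁻¹ * Qᵀ).PosSemidef := by
      rw [hdiff]
      have h := hProj.mul_mul_conjTranspose_same (Q * X'⁻¹ * W)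
      simpa [conjTranspose_eq_transpose_of_trivial] using h
    calc Real.sqrt (specNorm (Q * M⁻¹ * Qᵀ)) ≤ Real.sqrt (specNorm (G' * G'ᵀ)) :=
          Real.sqrt_le_sqrt (specNorm_le_specNorm hQMQpsd hdiffpsd)
      _ = specNorm G' := (specNorm_eq_sqrt G').symm
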